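/- Let g ≥ 4 be an even integer and let G be a finite 3-regular simple graph of girth g on n vertices that contains two vertices at distance at least g/2. Then for every integer k ≥ 1, setting m = 3k+1, there exists a finite simple graph H of girth exactly g and order k(n−2)+n+2 which has exactly two vertices of degree m while each of its remaining k(n−2)+n vertices has degree 3. -/

import Mathlib

namespace S2aux
open SimpleGraph

variable {V : Type} [DecidableEq V] (G : SimpleGraph V) (u v p q : V) (k : ℕ)

/-- Vertex type: k reduced copies, one full copy, and two hubs (Bool). -/
abbrev Hv (u v : V) (k : ℕ) : Type := (Fin k × {x : V // x ≠ u ∧ x ≠ v}) ⊕ (V ⊕ Bool)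

/-- hub vertices -/
abbrev AB (c : Bool) : Hv u v k := Sum.inr (Sum.inr c)

def hadj : Hv u v k → Hv u v k → Prop := fun x y =>
  match x, y with
  | .inl (i, z), .inl (j, w) => i = j ∧ G.Adj z.1 w.1
  | .inl (_, z), .inr (.inr c) => G.Adj (cond c v u) z.1
  | .inr (.inr c), .inl (_, z) => G.Adj (cond c v u) z.1
  | .inr (.inl w), .inr (.inl w') => G.Adj w w' ∧ ¬(w = p ∧ w' = q) ∧ ¬(w = q ∧ w' = p)
  | .inr (.inl w), .inr (.inr c) => w = cond c q p
  | .inr (.inr c), .inr (.inl w) => w = cond c q p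
  | _, _ => False

def HH : SimpleGraph (Hv u v k) where
  Adj := hadj G u v p q k
  symm := by
    constructor
    rintro (⟨i, z⟩ | w | c) (⟨j, w'⟩ | w' | c') h <;> simp_all [hadj] <;>
      first
      | exact ⟨h.1.symm, h.2.symm⟩
      | exact h.symm
      | exact ⟨h.1.symm, by tauto, by tauto⟩
      | tauto
  loopless := by
    constructor
    rintro (⟨i, z⟩ | w | c) h <;> simp_all [hadj]

def pr : Hv u v k → V
  | .inl (_, z) => z.1
  | .inr (.inl w) => w
  | .inr (.inr c) => cond c v u

def cop : Hv u v k → Option (Fin k)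
  | .inl (i, _) => some i
  | _ => none

def notAB : Hv u v k → Prop
  | .inr (.inr _) => False
  | _ => True

variable {G u v p q k}

lemma notAB_iff (x : Hv u v k) : notAB u v k x ↔ x ≠ AB u v k false ∧ x ≠ AB u v k true := by
  rcases x with ⟨i, z⟩ | w | c
  · simp [notAB, AB]
  · simp [notAB, AB]
  · cases c <;> simp [notAB, AB]

lemma adj_step (hpq : p ≠ q) {x y : Hv u v k} (h : (HH G u v p q k).Adj x y)
    (hx : notAB u v k x) (hy : notAB u v k y) :
    G.Adj (pr u v k x) (pr u v k y) ∧ cop u v k x = cop u v k y ∧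
      (cop u v k x = none → s(pr u v k x, pr u v k y) ≠ s(p, q)) := by
  rcases x with ⟨i, z⟩ | w | c <;> rcases y with ⟨j, z'⟩ | w' | c' <;>
    simp_all [HH, hadj, pr, cop, notAB]

lemma pr_inj {x y : Hv u v k} (hx : notAB u v k x) (hy : notAB u v k y)
    (hc : cop u v k x = cop u v k y) (hp : pr u v k x = pr u v k y) : x = y := by
  rcases x with ⟨i, z⟩ | w | c <;> rcases y with ⟨j, z'⟩ | w' | c' <;>
    simp_all [pr, cop, notAB]
  exact Subtype.ext hp


lemma proj_walk (hpq : p ≠ q) {x y : Hv u v k} (W : (HH G u v p q k).Walk x y)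
    (hW : ∀ z ∈ W.support, notAB u v k z) :
    ∃ P : G.Walk (pr u v k x) (pr u v k y),
      P.length = W.length ∧ P.support = W.support.map (pr u v k) ∧
      P.edges = W.edges.map (Sym2.map (pr u v k)) ∧
      (∀ z ∈ W.support, cop u v k z = cop u v k x) ∧
      (cop u v k x = none → ∀ ed ∈ P.edges, ed ≠ s(p, q)) := by
  induction W with
  | nil => exact ⟨SimpleGraph.Walk.nil, by simp⟩
  | @cons x x' y h W ih =>
    have hx : notAB u v k x := hW x (by simp)
    have hx' : notAB u v k x' := hW x' (by simp)
    obtain ⟨ha, hc, he⟩ := adj_step hpq h hx hx'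
    obtain ⟨P, hl, hs, hedg, hcop, hee⟩ := ih (fun z hz => hW z (by simp [hz]))
    refine ⟨SimpleGraph.Walk.cons ha P, by simp [hl], by simp [hs], by simp [hedg], ?_, ?_⟩
    · intro z hz
      rcases (by simpa using hz : z = x ∨ z ∈ W.support) with rfl | hz'
      · rfl
      · rw [hcop z hz', ← hc]
    · intro hnone ed hed
      rcases (by simpa using hed : ed = s(pr u v k x, pr u v k x') ∨ ed ∈ P.edges) with rfl | hed'
      · exact he hnone
      · exact hee (hc ▸ hnone) ed hed'


lemma caseA (hpq : p ≠ q) {g : ℕ}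
    (hG : ∀ (x : V) (w : G.Walk x x), w.IsCycle → g ≤ w.length)
    {x : Hv u v k} (W : (HH G u v p q k).Walk x x) (hWc : W.IsCycle)
    (hW : ∀ z ∈ W.support, notAB u v k z) : g ≤ W.length := by
  obtain ⟨P, hl, hs, hedg, hcop, -⟩ := proj_walk hpq W hW
  have hinj : ∀ z₁ ∈ W.support, ∀ z₂ ∈ W.support,
      pr u v k z₁ = pr u v k z₂ → z₁ = z₂ := fun z₁ h₁ z₂ h₂ hp =>
    pr_inj (hW _ h₁) (hW _ h₂) ((hcop _ h₁).trans (hcop _ h₂).symm) hp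
  have hPc : P.IsCycle := by
    rw [SimpleGraph.Walk.isCycle_def]
    refine ⟨⟨?_⟩, ?_, ?_⟩
    · rw [hedg]
      refine List.Nodup.map_on ?_ hWc.edges_nodup
      intro e₁ he₁ e₂ he₂ heq
      induction e₁ with
      | _ a₁ b₁ =>
      induction e₂ with
      | _ a₂ b₂ =>
      have ha₁ := W.fst_mem_support_of_mem_edges he₁
      have hb₁ := W.snd_mem_support_of_mem_edges he₁
      have ha₂ := W.fst_mem_support_of_mem_edges he₂
      have hb₂ := W.snd_mem_support_of_mem_edges he₂
      simp only [Sym2.map_pair_eq, Sym2.eq_iff] at heq ⊢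
      rcases heq with ⟨e1, e2⟩ | ⟨e1, e2⟩
      · exact Or.inl ⟨hinj _ ha₁ _ ha₂ e1, hinj _ hb₁ _ hb₂ e2⟩
      · exact Or.inr ⟨hinj _ ha₁ _ hb₂ e1, hinj _ hb₁ _ ha₂ e2⟩
    · intro hnil
      have : P.length = 0 := by rw [hnil]; rfl
      have h3 := hWc.three_le_length
      omega
    · rw [hs, ← List.map_tail]
      refine List.Nodup.map_on ?_ hWc.support_nodup
      intro z₁ h₁ z₂ h₂
      exact hinj _ (List.mem_of_mem_tail h₁) _ (List.mem_of_mem_tail h₂)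
  have := hG _ P hPc
  omega


lemma adj_hub {c : Bool} {z : Hv u v k} (h : (HH G u v p q k).Adj (AB u v k c) z) :
    (∃ i zz, z = Sum.inl (i, zz) ∧ G.Adj (cond c v u) zz.1) ∨
      z = Sum.inr (Sum.inl (cond c q p)) := by
  rcases z with ⟨i, zz⟩ | w | c' <;> simp only [HH, hadj, AB] at h
  · exact Or.inl ⟨i, zz, rfl, h⟩
  · exact Or.inr (by rw [h])

lemma caseC (hpq : p ≠ q) {g : ℕ}
    (hG : ∀ (x : V) (w : G.Walk x x), w.IsCycle → g ≤ w.length) {c : Bool}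
    (W : (HH G u v p q k).Walk (AB u v k c) (AB u v k c)) (hWc : W.IsCycle)
    (hb : AB u v k (!c) ∉ W.support) : g ≤ W.length := by
  cases W with
  | nil => exact absurd rfl hWc.ne_nil
  | @cons _ w1 _ h1 Q =>
  obtain ⟨w2, h2, R, hQR⟩ := SimpleGraph.Walk.exists_eq_cons_of_ne (h1.ne) Q.reverse
  -- support facts
  have hQnodup : Q.support.Nodup := by
    have := hWc.support_nodup
    simpa using this
  have hQRsupp : Q.support.reverse = AB u v k c :: R.support := by
    rw [← SimpleGraph.Walk.support_reverse, hQR, SimpleGraph.Walk.support_cons]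
  have hcR : AB u v k c ∉ R.support := by
    have : (Q.support.reverse).Nodup := by simpa using hQnodup
    rw [hQRsupp] at this
    exact (List.nodup_cons.mp this).1
  have hRsub : ∀ z ∈ R.support, z ∈ Q.support := by
    intro z hz
    rw [← List.mem_reverse, hQRsupp]
    exact List.mem_cons_of_mem _ hz
  have hRnotAB : ∀ z ∈ R.support, notAB u v k z := by
    intro z hz
    rw [notAB_iff]
    have hzc : z ≠ AB u v k c := fun h => hcR (h ▸ hz)
    have hznc : z ≠ AB u v k (!c) := by
      intro h
      exact hb (by simp [h ▸ hRsub z hz])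
    cases c
    · exact ⟨hzc, by simpa using hznc⟩
    · exact ⟨by simpa using hznc, hzc⟩
  have hRnodup : R.support.Nodup := by
    have : (Q.support.reverse).Nodup := by simpa using hQnodup
    rw [hQRsupp] at this
    exact (List.nodup_cons.mp this).2
  -- w1 ≠ w2
  have hWe : (SimpleGraph.Walk.cons h1 Q).edges = s(AB u v k c, w1) :: Q.edges := rfl
  have hQe2 : s(AB u v k c, w2) ∈ Q.edges := by
    have : s(AB u v k c, w2) ∈ Q.reverse.edges := by
      rw [hQR, SimpleGraph.Walk.edges_cons]
      exact List.mem_cons_self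
    simpa using this
  have hw12 : w1 ≠ w2 := by
    rintro rfl
    have := hWc.edges_nodup
    rw [hWe] at this
    exact (List.nodup_cons.mp this).1 hQe2
  -- projection
  have hw1R : w1 ∈ R.support := SimpleGraph.Walk.end_mem_support R
  have hw2R : w2 ∈ R.support := SimpleGraph.Walk.start_mem_support R
  -- classify w1 w2
  have hQl : Q.length = R.length + 1 := by
    rw [← SimpleGraph.Walk.length_reverse, hQR, SimpleGraph.Walk.length_cons]
  obtain ⟨P, hl, hs, hedg, hcop, -⟩ := proj_walk hpq R hRnotAB
  have hPinj : ∀ z₁ ∈ R.support, ∀ z₂ ∈ R.support,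
      pr u v k z₁ = pr u v k z₂ → z₁ = z₂ := fun z₁ hh₁ z₂ hh₂ hp =>
    pr_inj (hRnotAB _ hh₁) (hRnotAB _ hh₂) ((hcop _ hh₁).trans (hcop _ hh₂).symm) hp
  rcases adj_hub h1 with ⟨i1, z1, rfl, ha1⟩ | rfl
  · rcases adj_hub h2 with ⟨i2, z2, rfl, ha2⟩ | rfl
    · -- both reduced
      have hprne : ∀ x ∈ P.support, x ≠ u ∧ x ≠ v := by
        intro x hx
        rw [hs] at hx
        obtain ⟨z, hz, rfl⟩ := List.mem_map.mp hx
        have hcz := hcop z hz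
        rcases z with ⟨iz, zz⟩ | w | c' <;> simp [cop] at hcz
        exact ⟨zz.2.1, zz.2.2⟩
      have hprne' : ∀ x ∈ P.support, x ≠ cond c v u := by
        intro x hx
        cases c
        · exact (hprne x hx).1
        · exact (hprne x hx).2
      have hne12 : (z1 : V) ≠ (z2 : V) := by
        intro h
        exact hw12 (hPinj _ hw1R _ hw2R h)
      have hPnodup : P.support.Nodup := by
        rw [hs]
        exact List.Nodup.map_on hPinj hRnodup
      have hz1u' : G.Adj (pr u v k (Sum.inl (i1, z1))) (cond c v u) := ha1.symm
      let M := P.concat hz1u'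
      have hMpath : M.IsPath := by
        rw [← SimpleGraph.Walk.isPath_reverse_iff]
        show (P.concat hz1u').reverse.IsPath
        rw [SimpleGraph.Walk.reverse_concat, SimpleGraph.Walk.cons_isPath_iff]
        refine ⟨by rwa [SimpleGraph.Walk.isPath_reverse_iff, SimpleGraph.Walk.isPath_def], ?_⟩
        rw [SimpleGraph.Walk.support_reverse, List.mem_reverse]
        intro hmem
        exact hprne' _ hmem rfl
      have hedge_not : s(cond c v u, pr u v k (Sum.inl (i2, z2))) ∉ M.edges := by
        show _ ∉ (P.concat hz1u').edges
        rw [SimpleGraph.Walk.edges_concat]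
        intro hmem
        rw [List.concat_eq_append] at hmem
        rcases List.mem_append.mp hmem with hmem | hmem
        · exact hprne' _ (P.fst_mem_support_of_mem_edges hmem) rfl
        · rw [List.mem_singleton, Sym2.eq_iff] at hmem
          rcases hmem with ⟨h1', h2'⟩ | ⟨h1', h2'⟩
          · exact hprne' _ P.end_mem_support h1'.symm
          · exact hne12 (h2'.symm)
      have hNc : (SimpleGraph.Walk.cons ha2 M).IsCycle :=
        (SimpleGraph.Walk.cons_isCycle_iff _ _).mpr ⟨hMpath, hedge_not⟩
      have hlb := hG _ _ hNc
      have hNl : (SimpleGraph.Walk.cons ha2 M).length = P.length + 2 := by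
        exact congrArg (· + 1) (SimpleGraph.Walk.length_concat P hz1u')
      rw [SimpleGraph.Walk.length_cons, hQl]
      omega
    · -- w2 full, w1 reduced : impossible
      have := hcop _ hw1R
      simp [cop] at this
  · rcases adj_hub h2 with ⟨i2, z2, rfl, ha2⟩ | rfl
    · have := hcop _ hw1R
      simp [cop] at this
    · exact absurd rfl hw12


lemma hub_not_adj {c c' : Bool} : ¬ (HH G u v p q k).Adj (AB u v k c) (AB u v k c') := by
  simp [HH, hadj, AB]

lemma length_rotate {x y : Hv u v k} (W : (HH G u v p q k).Walk x x) (h : y ∈ W.support) :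
    (W.rotate _ h).length = W.length := by
  have h1 := congrArg SimpleGraph.Walk.length (W.take_spec h)
  rw [SimpleGraph.Walk.length_append] at h1
  simp only [SimpleGraph.Walk.rotate, SimpleGraph.Walk.length_append]
  omega

lemma dist_ab (hpq : G.Adj p q) {g : ℕ}
    (hG : ∀ (x : V) (w : G.Walk x x), w.IsCycle → g ≤ w.length)
    (hd : g / 2 ≤ G.dist u v) (hg4 : 4 ≤ g)
    (hreach : (HH G u v p q k).Reachable (AB u v k false) (AB u v k true)) :
    g / 2 ≤ (HH G u v p q k).dist (AB u v k false) (AB u v k true) := by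
  obtain ⟨S, hSp, hSl⟩ := hreach.exists_path_of_dist
  rw [← hSl]
  cases S with
  | @cons _ w1 _ h1 T =>
  have hw1B : w1 ≠ AB u v k true := by
    rintro rfl
    exact hub_not_adj h1
  obtain ⟨w2, h2, R, hTR⟩ := SimpleGraph.Walk.exists_eq_cons_of_ne
    (fun h => hw1B h.symm) T.reverse
  have hTnodup : T.support.Nodup := by
    have := hSp.support_nodup
    simpa using (List.nodup_cons.mp this).2
  have hAT : AB u v k false ∉ T.support := by
    have := hSp.support_nodup
    simpa using (List.nodup_cons.mp (by simpa using this)).1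
  have hTRsupp : T.support.reverse = AB u v k true :: R.support := by
    rw [← SimpleGraph.Walk.support_reverse, hTR, SimpleGraph.Walk.support_cons]
  have hBR : AB u v k true ∉ R.support := by
    have : (T.support.reverse).Nodup := by simpa using hTnodup
    rw [hTRsupp] at this
    exact (List.nodup_cons.mp this).1
  have hRsub : ∀ z ∈ R.support, z ∈ T.support := by
    intro z hz
    rw [← List.mem_reverse, hTRsupp]
    exact List.mem_cons_of_mem _ hz
  have hRnotAB : ∀ z ∈ R.support, notAB u v k z := by
    intro z hz
    rw [notAB_iff]
    exact ⟨fun h => hAT (h ▸ hRsub z hz), fun h => hBR (h ▸ hz)⟩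
  obtain ⟨P, hl, hs, hedg, hcop, hee⟩ := proj_walk hpq.ne R hRnotAB
  have hTl : T.length = R.length + 1 := by
    rw [← SimpleGraph.Walk.length_reverse, hTR, SimpleGraph.Walk.length_cons]
  have hw1R : w1 ∈ R.support := SimpleGraph.Walk.end_mem_support R
  rcases adj_hub h1 with ⟨i1, z1, rfl, ha1⟩ | rfl
  · rcases adj_hub h2 with ⟨i2, z2, rfl, ha2⟩ | rfl
    · -- both reduced: walk u → v in G
      have ha1' : G.Adj u (z1 : V) := by simpa using ha1
      have ha2' : G.Adj (z2 : V) v := by simpa using ha2.symm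
      have hdl := SimpleGraph.dist_le ((SimpleGraph.Walk.cons ha1' P.reverse).concat ha2')
      replace hdl : G.dist u v ≤ P.length + 1 + 1 := hdl.trans_eq
        ((SimpleGraph.Walk.length_concat _ _).trans (congrArg (· + 1 + 1) P.length_reverse))
      rw [SimpleGraph.Walk.length_cons, hTl]
      omega
    · have := hcop _ hw1R
      simp [cop] at this
  · rcases adj_hub h2 with ⟨i2, z2, rfl, ha2⟩ | rfl
    · have := hcop _ hw1R
      simp [cop] at this
    · -- both full : use cycle through edge pq
      have hPee : ∀ ed ∈ P.edges, ed ≠ s(p, q) := hee rfl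
      have hbyp : ∀ ed ∈ P.bypass.edges, ed ≠ s(p, q) := fun ed hed =>
        hPee ed (P.edges_bypass_subset hed)
      have hP : P.bypass.IsPath := SimpleGraph.Walk.bypass_isPath P
      have hcyc : (SimpleGraph.Walk.cons hpq (P.bypass : G.Walk q p)).IsCycle := by
        refine (SimpleGraph.Walk.cons_isCycle_iff _ _).mpr ?_
        exact ⟨hP, fun h => hbyp _ h rfl⟩
      have hlb := hG _ _ hcyc
      replace hlb : g ≤ P.bypass.length + 1 := hlb
      have hble := SimpleGraph.Walk.length_bypass_le P
      rw [SimpleGraph.Walk.length_cons, hTl]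
      omega
  

lemma mem_tail_closed {x : Hv u v k} (W : (HH G u v p q k).Walk x x) (hne : ¬ W.Nil) :
    x ∈ W.support.tail := by
  cases W with
  | nil => simp at hne
  | cons h Q => simpa using Q.end_mem_support

lemma cycle_len (hpq : G.Adj p q) {g : ℕ}
    (hG : ∀ (x : V) (w : G.Walk x x), w.IsCycle → g ≤ w.length)
    (hd : g / 2 ≤ G.dist u v) (hg4 : 4 ≤ g) (hgeven : Even g)
    {x : Hv u v k} (W : (HH G u v p q k).Walk x x) (hWc : W.IsCycle) :
    g ≤ W.length := by
  classical
  have hABne : (AB u v k false) ≠ (AB u v k true) := by simp [AB]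
  rcases Classical.em ((AB u v k false) ∈ W.support) with hA | hA
  · have hWnil : ¬ W.Nil := by
      intro h
      have := hWc.three_le_length
      rw [SimpleGraph.Walk.nil_iff_length_eq.mp h] at this
      omega
    set W1 := W.rotate _ hA with hW1
    have hW1c : W1.IsCycle := hWc.rotate hA
    have hW1l : W1.length = W.length := length_rotate W hA
    have htail : ∀ z, z ∈ W.support → z ∈ W1.support.tail := by
      intro z hz
      have hzt : z ∈ W.support.tail := by
        rw [SimpleGraph.Walk.support_eq_cons W] at hz
        rcases List.mem_cons.mp hz with rfl | h
        · exact mem_tail_closed W hWnil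
        · exact h
      exact (SimpleGraph.Walk.support_rotate W _ hA).mem_iff.mpr hzt
    have htail' : ∀ z, z ∈ W1.support.tail → z ∈ W.support := by
      intro z hz
      have := (SimpleGraph.Walk.support_rotate W _ hA).mem_iff.mp hz
      exact List.mem_of_mem_tail this
    rcases Classical.em ((AB u v k true) ∈ W.support) with hB | hB
    · -- case B : both hubs
      have hB1 : AB u v k true ∈ W1.support := List.mem_of_mem_tail (htail _ hB)
      have hreach : (HH G u v p q k).Reachable (AB u v k false) (AB u v k true) :=
        ⟨W1.takeUntil _ hB1⟩
      have hdab := dist_ab hpq hG hd hg4 hreach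
      have hd1 := SimpleGraph.dist_le (W1.takeUntil _ hB1)
      have hd2 := SimpleGraph.dist_le (W1.dropUntil _ hB1)
      have hsplit := congrArg SimpleGraph.Walk.length (W1.take_spec hB1)
      rw [SimpleGraph.Walk.length_append] at hsplit
      rw [SimpleGraph.dist_comm] at hd2
      obtain ⟨m, rfl⟩ := hgeven
      have hmm : (m + m) / 2 = m := by omega
      rw [hmm] at hdab
      omega
    · -- case C with c = false
      have hB1 : AB u v k true ∉ W1.support := by
        rw [SimpleGraph.Walk.support_eq_cons W1]
        intro hmem
        rcases List.mem_cons.mp hmem with h | h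
        · exact hABne h.symm
        · exact hB (htail' _ h)
      have := caseC hpq.ne hG W1 hW1c (by simpa using hB1)
      omega
  · rcases Classical.em ((AB u v k true) ∈ W.support) with hB | hB
    · -- case C with c = true
      have hWnil : ¬ W.Nil := by
        intro h
        have := hWc.three_le_length
        rw [SimpleGraph.Walk.nil_iff_length_eq.mp h] at this
        omega
      set W1 := W.rotate _ hB with hW1
      have hW1c : W1.IsCycle := hWc.rotate hB
      have hW1l : W1.length = W.length := length_rotate W hB
      have hA1 : AB u v k false ∉ W1.support := by
        rw [SimpleGraph.Walk.support_eq_cons W1]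
        intro hmem
        rcases List.mem_cons.mp hmem with h | h
        · exact hABne h
        · refine hA (List.mem_of_mem_tail ?_)
          exact (SimpleGraph.Walk.support_rotate W _ hB).mem_iff.mp h
      have := caseC hpq.ne hG W1 hW1c (by simpa using hA1)
      omega
    · -- case A
      refine caseA hpq.ne hG W hWc ?_
      intro z hz
      rw [notAB_iff]
      exact ⟨fun h => hA (h ▸ hz), fun h => hB (h ▸ hz)⟩



lemma adj_hub_red {c : Bool} {i : Fin k} {zz : {x : V // x ≠ u ∧ x ≠ v}} :
    (HH G u v p q k).Adj (AB u v k c) (Sum.inl (i, zz)) ↔ G.Adj (cond c v u) zz.1 :=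
  Iff.rfl


lemma adj_hub_full {c : Bool} {w : V} :
    (HH G u v p q k).Adj (AB u v k c) (Sum.inr (Sum.inl w)) ↔ w = cond c q p :=
  Iff.rfl


lemma adj_red_red {i j : Fin k} {z zz : {x : V // x ≠ u ∧ x ≠ v}} :
    (HH G u v p q k).Adj (Sum.inl (i, z)) (Sum.inl (j, zz)) ↔ i = j ∧ G.Adj z.1 zz.1 :=
  Iff.rfl


lemma adj_red_hub {i : Fin k} {z : {x : V // x ≠ u ∧ x ≠ v}} {c : Bool} :
    (HH G u v p q k).Adj (Sum.inl (i, z)) (AB u v k c) ↔ G.Adj (cond c v u) z.1 :=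
  Iff.rfl


lemma adj_red_full {i : Fin k} {z : {x : V // x ≠ u ∧ x ≠ v}} {w : V} :
    ¬ (HH G u v p q k).Adj (Sum.inl (i, z)) (Sum.inr (Sum.inl w)) :=
  fun h => h


lemma adj_full_full {w w' : V} :
    (HH G u v p q k).Adj (Sum.inr (Sum.inl w)) (Sum.inr (Sum.inl w')) ↔
      G.Adj w w' ∧ ¬(w = p ∧ w' = q) ∧ ¬(w = q ∧ w' = p) :=
  Iff.rfl


lemma adj_full_hub {w : V} {c : Bool} :
    (HH G u v p q k).Adj (Sum.inr (Sum.inl w)) (AB u v k c) ↔ w = cond c q p :=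
  Iff.rfl



section degrees
variable [Fintype V]

lemma ncard_hub (hreg : ∀ x : V, (G.neighborSet x).ncard = 3)
    (hnuv : ¬ G.Adj u v) (c : Bool) :
    ((HH G u v p q k).neighborSet (AB u v k c)).ncard = 3 * k + 1 := by
  classical
  set u' := cond c v u with hu'
  have hmemne : ∀ x ∈ G.neighborSet u', x ≠ u ∧ x ≠ v := by
    intro x hx
    rw [SimpleGraph.mem_neighborSet] at hx
    cases c
    · exact ⟨hx.ne', fun h => hnuv (h ▸ hx)⟩
    · exact ⟨fun h => hnuv (h ▸ hx).symm, hx.ne'⟩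
  set f : V × Fin k → Hv u v k := fun zi =>
    if h : zi.1 ≠ u ∧ zi.1 ≠ v then Sum.inl (zi.2, ⟨zi.1, h⟩) else AB u v k c with hf
  have hset : (HH G u v p q k).neighborSet (AB u v k c) =
      f '' ((G.neighborSet u') ×ˢ (Set.univ : Set (Fin k))) ∪
        {Sum.inr (Sum.inl (cond c q p))} := by
    ext y
    constructor
    · intro hy
      rw [SimpleGraph.mem_neighborSet] at hy
      rcases adj_hub hy with ⟨i, zz, rfl, hazz⟩ | rfl
      · left
        refine ⟨(zz.1, i), by simpa using hazz, ?_⟩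
        rw [hf]
        simp only
        rw [dif_pos zz.2]
      · right; rfl
    · intro hy
      rw [SimpleGraph.mem_neighborSet]
      rcases hy with ⟨⟨x, i⟩, hmem, rfl⟩ | hy
      · have hx : x ≠ u ∧ x ≠ v := hmemne x (by simpa using hmem.1)
        rw [hf]; simp only; rw [dif_pos hx]
        rw [adj_hub_red]
        simpa [hu'] using hmem.1
      · rw [Set.mem_singleton_iff] at hy
        subst hy
        rw [adj_hub_full]
  rw [hset]
  have himg : (f '' ((G.neighborSet u') ×ˢ (Set.univ : Set (Fin k)))).ncard
      = 3 * k := by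
    rw [Set.ncard_image_of_injOn]
    · rw [← Nat.card_coe_set_eq, Nat.card_congr (Equiv.Set.prod _ _), Nat.card_prod]
      rw [Nat.card_coe_set_eq, hreg u']
      have : Nat.card (Set.univ : Set (Fin k)) = k := by
        rw [Nat.card_congr (Equiv.Set.univ _)]
        simp
      rw [this]
    · intro z1 h1 z2 h2 heq
      have hx1 := hmemne z1.1 (by simpa using (Set.mem_prod.mp h1).1)
      have hx2 := hmemne z2.1 (by simpa using (Set.mem_prod.mp h2).1)
      rw [hf] at heq; simp only at heq
      rw [dif_pos hx1, dif_pos hx2] at heq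
      simp only [Sum.inl.injEq, Prod.mk.injEq, Subtype.mk.injEq] at heq
      exact Prod.ext heq.2 heq.1
  rw [Set.ncard_union_eq _ (Set.toFinite _) (Set.toFinite _), himg, Set.ncard_singleton]
  rw [Set.disjoint_left]
  rintro y ⟨⟨x, i⟩, hmem, rfl⟩ hy
  have hx : x ≠ u ∧ x ≠ v := hmemne x (by simpa using (Set.mem_prod.mp hmem).1)
  rw [hf] at hy; simp only at hy; rw [dif_pos hx] at hy
  simp at hy


lemma ncard_red (hreg : ∀ x : V, (G.neighborSet x).ncard = 3) (hne : u ≠ v)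
    (i : Fin k) (z : {x : V // x ≠ u ∧ x ≠ v}) :
    ((HH G u v p q k).neighborSet (Sum.inl (i, z))).ncard = 3 := by
  classical
  set f : V → Hv u v k := fun x =>
    if hx : x = u then AB u v k false
    else if hx2 : x = v then AB u v k true
    else Sum.inl (i, ⟨x, hx, hx2⟩) with hf
  have hset : (HH G u v p q k).neighborSet (Sum.inl (i, z)) = f '' G.neighborSet z.1 := by
    ext y
    constructor
    · intro hy
      rw [SimpleGraph.mem_neighborSet] at hy
      rcases y with ⟨j, zz⟩ | w | c
      · obtain ⟨rfl, hadjz⟩ := adj_red_red.mp hy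
        refine ⟨zz.1, by simpa using hadjz, ?_⟩
        rw [hf]; simp only
        rw [dif_neg zz.2.1, dif_neg zz.2.2]
      · exact absurd hy (adj_red_full)
      · have hadjz := adj_red_hub.mp hy
        cases c
        · refine ⟨u, by simpa using (by simpa using hadjz : G.Adj u z.1).symm, ?_⟩
          rw [hf]; simp
        · refine ⟨v, by simpa using (by simpa using hadjz : G.Adj v z.1).symm, ?_⟩
          rw [hf]; simp [Ne.symm hne]
    · rintro ⟨x, hx, rfl⟩
      rw [SimpleGraph.mem_neighborSet] at hx ⊢
      rw [hf]; simp only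
      by_cases hxu : x = u
      · subst hxu
        rw [dif_pos rfl, adj_red_hub]
        simpa using hx.symm
      · by_cases hxv : x = v
        · subst hxv
          rw [dif_neg hxu, dif_pos rfl, adj_red_hub]
          simpa using hx.symm
        · rw [dif_neg hxu, dif_neg hxv, adj_red_red]
          exact ⟨rfl, hx⟩
  rw [hset, Set.ncard_image_of_injOn, hreg]
  intro x1 h1 x2 h2 heq
  rw [hf] at heq; simp only at heq
  by_cases h1u : x1 = u <;> by_cases h2u : x2 = u
  · rw [h1u, h2u]
  · rw [dif_pos h1u] at heq
    by_cases h2v : x2 = v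
    · rw [dif_neg h2u, dif_pos h2v] at heq; simp [AB] at heq
    · rw [dif_neg h2u, dif_neg h2v] at heq; simp [AB] at heq
  · rw [dif_pos h2u] at heq
    by_cases h1v : x1 = v
    · rw [dif_neg h1u, dif_pos h1v] at heq; simp [AB] at heq
    · rw [dif_neg h1u, dif_neg h1v] at heq; simp [AB] at heq
  · rw [dif_neg h1u, dif_neg h2u] at heq
    by_cases h1v : x1 = v <;> by_cases h2v : x2 = v
    · rw [h1v, h2v]
    · rw [dif_pos h1v, dif_neg h2v] at heq; simp [AB] at heq
    · rw [dif_neg h1v, dif_pos h2v] at heq; simp [AB] at heq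
    · rw [dif_neg h1v, dif_neg h2v] at heq
      simpa using heq

lemma ncard_full (hreg : ∀ x : V, (G.neighborSet x).ncard = 3) (hpq : G.Adj p q)
    (w : V) : ((HH G u v p q k).neighborSet (Sum.inr (Sum.inl w))).ncard = 3 := by
  classical
  set f : V → Hv u v k := fun x =>
    if w = p ∧ x = q then AB u v k false
    else if w = q ∧ x = p then AB u v k true
    else Sum.inr (Sum.inl x) with hf
  have hset : (HH G u v p q k).neighborSet (Sum.inr (Sum.inl w)) = f '' G.neighborSet w := by
    ext y
    constructor
    · intro hy
      rw [SimpleGraph.mem_neighborSet] at hy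
      rcases y with ⟨j, zz⟩ | w' | c
      · exact absurd ((HH G u v p q k).adj_symm hy) (adj_red_full)
      · obtain ⟨ha, hn1, hn2⟩ := adj_full_full.mp hy
        refine ⟨w', ha, ?_⟩
        rw [hf]; simp only
        rw [if_neg hn1, if_neg hn2]
      · have hc := adj_full_hub.mp hy
        cases c
        · subst hc
          refine ⟨q, hpq, ?_⟩
          rw [hf]; simp
        · subst hc
          refine ⟨p, hpq.symm, ?_⟩
          rw [hf]; simp [hpq.ne']
    · rintro ⟨x, hx, rfl⟩
      rw [SimpleGraph.mem_neighborSet] at hx ⊢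
      rw [hf]; simp only
      by_cases hc1 : w = p ∧ x = q
      · rw [if_pos hc1, adj_full_hub]
        exact hc1.1
      · by_cases hc2 : w = q ∧ x = p
        · rw [if_neg hc1, if_pos hc2, adj_full_hub]
          exact hc2.1
        · rw [if_neg hc1, if_neg hc2, adj_full_full]
          exact ⟨hx, hc1, hc2⟩
  rw [hset, Set.ncard_image_of_injOn, hreg]
  intro x1 h1 x2 h2 heq
  rw [hf] at heq; simp only at heq
  by_cases hc1 : w = p ∧ x1 = q <;> by_cases hc2 : w = p ∧ x2 = q
  · rw [hc1.2, hc2.2]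
  · rw [if_pos hc1, if_neg hc2] at heq
    by_cases hc3 : w = q ∧ x2 = p
    · rw [if_pos hc3] at heq; simp [AB] at heq
    · rw [if_neg hc3] at heq; simp [AB] at heq
  · rw [if_neg hc1, if_pos hc2] at heq
    by_cases hc3 : w = q ∧ x1 = p
    · rw [if_pos hc3] at heq; simp [AB] at heq
    · rw [if_neg hc3] at heq; simp [AB] at heq
  · rw [if_neg hc1, if_neg hc2] at heq
    by_cases hc3 : w = q ∧ x1 = p <;> by_cases hc4 : w = q ∧ x2 = p
    · rw [hc3.2, hc4.2]
    · rw [if_pos hc3, if_neg hc4] at heq; simp [AB] at heq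
    · rw [if_neg hc3, if_pos hc4] at heq; simp [AB] at heq
    · rw [if_neg hc3, if_neg hc4] at heq
      simpa using heq

end degrees

lemma egirth_le_of_cycle {α : Type} {Γ : SimpleGraph α} {x : α} {w : Γ.Walk x x}
    (h : w.IsCycle) : Γ.egirth ≤ w.length := by
  rw [SimpleGraph.egirth]
  exact iInf_le_of_le x (iInf_le_of_le w (iInf_le_of_le h le_rfl))

lemma egirth_le_embed {α β : Type} {G1 : SimpleGraph α} {G2 : SimpleGraph β}
    (f : G1 ↪g G2) : G2.egirth ≤ G1.egirth := by
  rw [SimpleGraph.le_egirth]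
  intro a w hw
  have hc : (w.map f.toHom).IsCycle :=
    (SimpleGraph.Walk.map_isCycle_iff_of_injective f.injective).mpr hw
  have := egirth_le_of_cycle hc
  rwa [SimpleGraph.Walk.length_map] at this

lemma egirth_iso {α β : Type} {G1 : SimpleGraph α} {G2 : SimpleGraph β}
    (f : G1 ≃g G2) : G2.egirth = G1.egirth :=
  le_antisymm (egirth_le_embed f.toEmbedding) (egirth_le_embed f.symm.toEmbedding)

lemma card_Hv [Fintype V] [DecidableEq V] (hne : u ≠ v) :
    Fintype.card (Hv u v k) = k * (Fintype.card V - 2) + Fintype.card V + 2 := by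
  rw [Fintype.card_sum, Fintype.card_sum, Fintype.card_prod, Fintype.card_bool,
    Fintype.card_fin]
  have h1 : Fintype.card {x : V // x ≠ u ∧ x ≠ v} = Fintype.card V - 2 := by
    rw [Fintype.card_subtype]
    have h2 : Finset.univ.filter (fun x : V => x ≠ u ∧ x ≠ v) =
        Finset.univ \ {u, v} := by
      ext x; simp [not_or]
    rw [h2, Finset.card_sdiff_of_subset (Finset.subset_univ _)]
    have : ({u, v} : Finset V).card = 2 := by
      rw [Finset.card_insert_of_notMem (by simp [hne]), Finset.card_singleton]
    rw [this, Finset.card_univ]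
  rw [h1]
  ring

/-- the hub embedding of the full copy minus the edge pq -/
lemma full_copy_cycle (hpq : G.Adj p q) {x0 : V} (C : G.Walk x0 x0) (hC : C.IsCycle)
    (hCe : s(p, q) ∉ C.edges) :
    ∃ (y : Hv u v k) (W : (HH G u v p q k).Walk y y), W.IsCycle ∧ W.length = C.length := by
  classical
  set G' := G.deleteEdges {s(p, q)} with hG'
  have hsub : ∀ ed ∈ C.edges, ed ∈ G'.edgeSet := by
    intro ed hed
    rw [hG', SimpleGraph.edgeSet_deleteEdges]
    exact ⟨C.edges_subset_edgeSet hed, by simp; rintro rfl; exact hCe hed⟩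
  set C' := C.transfer G' hsub with hC'
  have hC'c : C'.IsCycle := SimpleGraph.Walk.IsCycle.transfer hC hsub
  have hmap : ∀ w w' : V, G'.Adj w w' →
      (HH G u v p q k).Adj (Sum.inr (Sum.inl w)) (Sum.inr (Sum.inl w')) := by
    intro w w' h
    rw [hG', SimpleGraph.deleteEdges_adj] at h
    rw [adj_full_full]
    refine ⟨h.1, ?_, ?_⟩
    · rintro ⟨rfl, rfl⟩; exact h.2 (by simp)
    · rintro ⟨rfl, rfl⟩; exact h.2 (by simp [Sym2.eq_swap])
  set φ : G' →g (HH G u v p q k) :=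
    ⟨fun w => Sum.inr (Sum.inl w), fun h => hmap _ _ h⟩ with hφ
  have hinj : Function.Injective φ := by
    intro a b h
    have h' : (Sum.inr (Sum.inl a) : Hv u v k) = Sum.inr (Sum.inl b) := h
    simpa using h'
  refine ⟨Sum.inr (Sum.inl x0), C'.map φ, ?_, ?_⟩
  · exact (SimpleGraph.Walk.map_isCycle_iff_of_injective hinj).mpr hC'c
  · rw [SimpleGraph.Walk.length_map, SimpleGraph.Walk.length_transfer]

end S2aux

open S2aux

/-- Let `g ≥ 4` be an even integer and let `G` be a finite 3-regular simple
graph of girth `g` on `n` vertices that contains two vertices at distance at least `g/2`.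
Then for every integer `k ≥ 1`, setting `m = 3k+1`, there exists a finite simple graph `H`
of girth exactly `g` and order `k(n−2)+n+2` which has exactly two vertices of degree `m`
while each of its remaining `k(n−2)+n` vertices has degree `3`. -/
theorem statement2 (g : ℕ) (hg4 : 4 ≤ g) (hgeven : Even g)
    (V : Type) [Fintype V] (G : SimpleGraph V)
    (hreg : ∀ v : V, (G.neighborSet v).ncard = 3)
    (hgirth : G.egirth = (g : ℕ∞))
    (hdist : ∃ u v : V, g / 2 ≤ G.dist u v)
    (k : ℕ) (hk : 1 ≤ k) :
    ∃ H : SimpleGraph (Fin (k * (Fintype.card V - 2) + Fintype.card V + 2)),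
      H.egirth = (g : ℕ∞) ∧
      ∃ a b : Fin (k * (Fintype.card V - 2) + Fintype.card V + 2), a ≠ b ∧
        (H.neighborSet a).ncard = 3 * k + 1 ∧ (H.neighborSet b).ncard = 3 * k + 1 ∧
        ∀ w, w ≠ a → w ≠ b → (H.neighborSet w).ncard = 3 := by
  classical
  obtain ⟨u, v, hd⟩ := hdist
  have hg2 : 2 ≤ g / 2 := by omega
  have hdist2 : 2 ≤ G.dist u v := le_trans hg2 hd
  have hne : u ≠ v := by
    rintro rfl
    rw [SimpleGraph.dist_self] at hdist2
    omega
  have hnuv : ¬ G.Adj u v := by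
    intro h
    have := SimpleGraph.dist_le h.toWalk
    simp at this
    omega
  -- girth facts
  have hnotacyclic : ¬ G.IsAcyclic := by
    rw [← SimpleGraph.egirth_eq_top]
    rw [hgirth]
    simp
  obtain ⟨x0, C, hC, hCl⟩ := SimpleGraph.exists_egirth_eq_length.mpr hnotacyclic
  have hClen : C.length = g := by
    rw [hgirth] at hCl
    exact_mod_cast hCl.symm
  have hG_lb : ∀ (x : V) (w : G.Walk x x), w.IsCycle → g ≤ w.length := by
    intro x w hw
    have h1 : G.egirth ≤ w.length := egirth_le_of_cycle hw
    rw [hgirth] at h1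
    exact_mod_cast h1
  -- degree/edge counting to find an edge off C
  have hdeg : ∀ x : V, G.degree x = 3 := by
    intro x
    have h1 : (G.neighborSet x).ncard = Fintype.card (G.neighborSet x) := by
      rw [Set.ncard_eq_toFinset_card', Set.toFinset_card]
    rw [← SimpleGraph.card_neighborSet_eq_degree, ← h1, hreg]
  have hedges : 2 * G.edgeFinset.card = 3 * Fintype.card V := by
    rw [← SimpleGraph.sum_degrees_eq_twice_card_edges]
    simp [hdeg, Finset.sum_const, mul_comm]
  have hn_ge : g ≤ Fintype.card V := by
    have h1 : C.support.tail.Nodup := hC.support_nodup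
    have h2 := h1.length_le_card
    have h3 : C.support.length = C.length + 1 := SimpleGraph.Walk.length_support C
    have h4 : C.support.tail.length = C.length := by
      rw [List.length_tail, h3]
      omega
    omega
  have hCedge_card : C.edges.toFinset.card = g := by
    rw [List.toFinset_card_of_nodup hC.edges_nodup, SimpleGraph.Walk.length_edges, hClen]
  have hCsub : C.edges.toFinset ⊆ G.edgeFinset := by
    intro e he
    rw [List.mem_toFinset] at he
    rw [SimpleGraph.mem_edgeFinset]
    exact C.edges_subset_edgeSet he
  obtain ⟨e, hemem, henot⟩ : ∃ e ∈ G.edgeFinset, e ∉ C.edges.toFinset := by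
    by_contra hcon
    push_neg at hcon
    have := Finset.card_le_card hcon
    omega
  induction e using Sym2.ind with
  | _ p q =>
  have hpq : G.Adj p q := by rwa [SimpleGraph.mem_edgeFinset, SimpleGraph.mem_edgeSet] at hemem
  have hCe : s(p, q) ∉ C.edges := fun h => henot (List.mem_toFinset.mpr h)
  -- the construction
  have hcard : Fintype.card (Hv u v k) =
      k * (Fintype.card V - 2) + Fintype.card V + 2 := card_Hv hne
  let ε := Fintype.equivFinOfCardEq hcard
  let H0 := HH G u v p q k
  let iso : H0 ≃g H0.map ε.toEmbedding := SimpleGraph.Iso.map ε H0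
  have hns : ∀ x : Hv u v k,
      ((H0.map ε.toEmbedding).neighborSet (ε x)).ncard = (H0.neighborSet x).ncard := by
    intro x
    rw [← Nat.card_coe_set_eq, ← Nat.card_coe_set_eq]
    exact Nat.card_congr (iso.mapNeighborSet x).symm
  refine ⟨H0.map ε.toEmbedding, ?_, ε (AB u v k false), ε (AB u v k true), ?_, ?_, ?_, ?_⟩
  · -- girth
    rw [egirth_iso iso]
    refine le_antisymm ?_ ?_
    · obtain ⟨y, W, hWc, hWl⟩ := full_copy_cycle (u := u) (v := v) (k := k) hpq C hC hCe
      have := egirth_le_of_cycle hWc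
      rw [hWl, hClen] at this
      exact this
    · rw [SimpleGraph.le_egirth]
      intro a w hw
      exact_mod_cast cycle_len hpq hG_lb hd hg4 hgeven w hw
  · exact fun h => (by simp [AB] : (AB u v k false) ≠ AB u v k true) (ε.injective h)
  · rw [hns]
    exact ncard_hub hreg hnuv false
  · rw [hns]
    exact ncard_hub hreg hnuv true
  · intro w hwa hwb
    obtain ⟨x, rfl⟩ := ε.surjective w
    have hxa : x ≠ AB u v k false := fun h => hwa (by rw [h])
    have hxb : x ≠ AB u v k true := fun h => hwb (by rw [h])
    rw [hns]
    rcases x with ⟨i, z⟩ | w' | c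
    · exact ncard_red hreg hne i z
    · exact ncard_full hreg hpq w'
    · cases c
      · exact absurd rfl hxa
      · exact absurd rfl hxb
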